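/- Suppose all n players use protocol Q. For any j ∈ {1, …, k}, if the number of pending players at the start of interval I_j is at most n_j, then with probability at least 1 − exp(−β^{j+2} n / 3), the number of pending players at the end of interval I_j is at most n_{j+1}. -/

import Mathlib

open scoped ENNReal

namespace Contention

/-- An acknowledgment-based protocol: maps a player's personal transmission history
(the list of her own past transmission indicators, oldest slot first) to the
probability of transmitting in the next slot. -/
abbrev Protocol : Type := List Bool → ℝ

/-- A protocol is valid if it always prescribes a probability in `[0,1]`. -/
def ValidProtocol (f : Protocol) : Prop := ∀ h : List Bool, 0 ≤ f h ∧ f h ≤ 1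

/-- A joint transmission history: the list of transmission vectors, oldest slot first. -/
abbrev Hist (n : ℕ) : Type := List (Fin n → Bool)

/-- The personal transmission history of player `i` extracted from a joint history. -/
def personal {n : ℕ} (h : Hist n) (i : Fin n) : List Bool := h.map fun v => v i

/-- Player `i` transmits alone (hence successfully) in the slot with transmission vector `v`. -/
def alone {n : ℕ} (v : Fin n → Bool) (i : Fin n) : Prop :=
  v i = true ∧ ∀ j : Fin n, j ≠ i → v j = false

instance {n : ℕ} (v : Fin n → Bool) (i : Fin n) : Decidable (alone v i) := by
  unfold alone; infer_instance

/-- Player `i` is still pending after joint history `h` (she never transmitted alone). -/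
def pending {n : ℕ} (h : Hist n) (i : Fin n) : Prop := ∀ v ∈ h, ¬ alone v i

instance {n : ℕ} (h : Hist n) (i : Fin n) : Decidable (pending h i) := by
  unfold pending; infer_instance

/-- Probability that the next slot has transmission vector `v`, given joint history `h`:
each pending player transmits independently with the probability her protocol assigns to
her personal history, and players that already succeeded stay quiet. -/
noncomputable def stepProb {n : ℕ} (F : Fin n → Protocol) (h : Hist n) (v : Fin n → Bool) : ℝ :=
  ∏ i : Fin n,
    if pending h i then
      (if v i = true then F i (personal h i) else 1 - F i (personal h i))
    else
      (if v i = true then 0 else 1)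

/-- Probability that, starting after joint history `h`, the next `e.length` slots produce
exactly the extension `e`. -/
noncomputable def contProb {n : ℕ} (F : Fin n → Protocol) (h e : Hist n) : ℝ :=
  ∏ t ∈ Finset.range e.length, stepProb F (h ++ e.take t) (e.getD t fun _ => false)

/-- Probability that the first `h.length` slots produce exactly the joint history `h`. -/
noncomputable def histProb {n : ℕ} (F : Fin n → Protocol) (h : Hist n) : ℝ := contProb F [] h

/-- Conditional probability, given joint history `h`, that player `i` is still pending
after `s` further slots. -/
noncomputable def condPendProb {n : ℕ} (F : Fin n → Protocol) (h : Hist n) (i : Fin n)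
    (s : ℕ) : ℝ :=
  ∑ e : Fin s → Fin n → Bool,
    if pending (h ++ List.ofFn e) i then contProb F h (List.ofFn e) else 0

/-- Conditional expected latency `E[Tᵢ | h]` of player `i` given joint history `h`
(`Tᵢ` is the first slot in which `i` transmits alone), computed via
`E[Tᵢ | h] = ∑_{s ≥ 0} Pr(Tᵢ > s | h)`; for `s ≤ h.length` the event `Tᵢ > s` is
determined by `h`, and for larger `s` its probability is `condPendProb`. -/
noncomputable def condLatency {n : ℕ} (F : Fin n → Protocol) (h : Hist n) (i : Fin n) : ℝ≥0∞ :=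
  ∑' s : ℕ,
    if s ≤ h.length then (if pending (h.take s) i then 1 else 0)
    else ENNReal.ofReal (condPendProb F h i (s - h.length))

/-- Conditional expected number of further slots until player `i` succeeds, given joint
history `h` (the slot of the successful transmission itself is counted). -/
noncomputable def condRemaining {n : ℕ} (F : Fin n → Protocol) (h : Hist n) (i : Fin n) : ℝ≥0∞ :=
  ∑' s : ℕ, ENNReal.ofReal (condPendProb F h i s)

/-- A profile of protocols is in equilibrium if after no joint history (arising with
positive probability) can a player strictly decrease her conditional expected latency
by unilaterally switching to another (valid) protocol. -/
def IsEquilibrium {n : ℕ} (F : Fin n → Protocol) : Prop :=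
  ∀ i : Fin n, ∀ h : Hist n, 0 < histProb F h →
    ∀ g : Protocol, ValidProtocol g →
      condLatency F h i ≤ condLatency (Function.update F i g) h i

end Contention

namespace Contention

/-- An age-based protocol: the transmission probability in slot `t` (that is, after a
personal history of length `t − 1`) is `p t`, depending only on the time `t ≥ 1`. -/
def ageProtocol (p : ℕ → ℝ) : Protocol := fun h => p (h.length + 1)

end Contention

namespace Contention

/-- `nj β n j = βʲ·n`, the target number of pending players for interval `Iⱼ`. -/
noncomputable def nj (β : ℝ) (n : ℕ) (j : ℕ) : ℝ := β ^ j * n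

/-- The length `ℓⱼ` of interval `Iⱼ`: `⌊(e/β)·nⱼ⌋` for `j ≤ k`, and `n` for `j = k+1`. -/
noncomputable def intervalLen (β : ℝ) (n k : ℕ) (j : ℕ) : ℕ :=
  if j ≤ k then ⌊(Real.exp 1 / β) * nj β n j⌋₊ else n

/-- The total length `ℓ₁ + ⋯ + ℓⱼ` of the first `j` intervals, so interval `Iⱼ` consists
of the slots `t` with `cumLen (j-1) < t ≤ cumLen j`. -/
noncomputable def cumLen (β : ℝ) (n k : ℕ) (j : ℕ) : ℕ :=
  ∑ j' ∈ Finset.Icc 1 j, intervalLen β n k j'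

/-- The deadline `t₀ = 1 + ℓ₁ + ⋯ + ℓ_{k+1}` of protocol `Q`. -/
noncomputable def deadline (β : ℝ) (n k : ℕ) : ℕ := 1 + cumLen β n k (k + 1)

/-- `QSpec β n k p` says that the age-based sequence `p` is the protocol `Q`: it transmits
with probability `1/nⱼ` in every slot of interval `Iⱼ` (for `j = 1, …, k+1`) and with
probability `1` in every slot `t ≥ t₀`. -/
def QSpec (β : ℝ) (n k : ℕ) (p : ℕ → ℝ) : Prop :=
  (∀ j : ℕ, 1 ≤ j → j ≤ k + 1 →
    ∀ t : ℕ, cumLen β n k (j - 1) < t → t ≤ cumLen β n k j → p t = 1 / nj β n j) ∧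
  (∀ t : ℕ, deadline β n k ≤ t → p t = 1)

/-- The number of pending players after joint history `h`. -/
def pendCount {n : ℕ} (h : Hist n) : ℕ := (Finset.univ.filter fun i : Fin n => pending h i).card

open Classical in
/-- The conditional probability, given joint history `h`, that the joint history after `s`
further slots satisfies property `P`. -/
noncomputable def condEvProb {n : ℕ} (F : Fin n → Protocol) (h : Hist n) (s : ℕ)
    (P : Hist n → Prop) : ℝ :=
  ∑ e : Fin s → Fin n → Bool,
    if P (h ++ List.ofFn e) then contProb F h (List.ofFn e) else 0

end Contention

namespace Contention

lemma contProb_nil {n : ℕ} (F : Fin n → Protocol) (h : Hist n) : contProb F h [] = 1 := by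
  simp [contProb]

lemma contProb_cons {n : ℕ} (F : Fin n → Protocol) (h : Hist n) (v : Fin n → Bool) (e : Hist n) :
    contProb F h (v :: e) = stepProb F h v * contProb F (h ++ [v]) e := by
  unfold contProb
  rw [List.length_cons, Finset.prod_range_succ']
  simp only [List.take_succ_cons, List.getD_cons_succ, List.take_zero, List.append_nil,
    List.getD_cons_zero, List.append_assoc, List.singleton_append]
  exact mul_comm _ _

lemma pending_append {n : ℕ} (h e : Hist n) (i : Fin n) :
    pending (h ++ e) i ↔ pending h i ∧ pending e i := by
  simp [pending, List.mem_append, or_imp, forall_and]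

lemma pending_concat {n : ℕ} (h : Hist n) (v : Fin n → Bool) (i : Fin n) :
    pending (h ++ [v]) i ↔ pending h i ∧ ¬ alone v i := by
  simp [pending, List.mem_append, or_imp, forall_and, forall_eq]

lemma pendCount_append_le {n : ℕ} (h e : Hist n) : pendCount (h ++ e) ≤ pendCount h := by
  apply Finset.card_le_card
  intro i hi
  simp only [Finset.mem_filter, pending_append] at hi ⊢
  exact ⟨hi.1, hi.2.1⟩

lemma alone_unique {n : ℕ} {v : Fin n → Bool} {i i' : Fin n} (hi : alone v i) (hi' : alone v i') :
    i' = i := by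
  by_contra hne
  exact (hi.1 ▸ (hi'.2 i (fun hh => hne hh.symm)) ▸ (by simp : ¬ (true = false)))
    (by rw [← hi.1, hi'.2 i (fun hh => hne hh.symm)] )

lemma pendCount_concat_good {n : ℕ} (h : Hist n) (v : Fin n → Bool) (i : Fin n)
    (hi : pending h i) (hv : alone v i) : pendCount (h ++ [v]) = pendCount h - 1 := by
  have hset : (Finset.univ.filter fun i' : Fin n => pending (h ++ [v]) i') =
      (Finset.univ.filter fun i' : Fin n => pending h i').erase i := by
    ext i'
    simp only [Finset.mem_erase, Finset.mem_filter, Finset.mem_univ, true_and, pending_concat]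
    constructor
    · rintro ⟨hp, hna⟩
      refine ⟨fun hii => hna (hii ▸ hv), hp⟩
    · rintro ⟨hne, hp⟩
      refine ⟨hp, fun ha => hne (alone_unique hv ha)⟩
  rw [pendCount, hset, Finset.card_erase_of_mem (by simp [hi])]
  rfl

lemma pendCount_concat_bad {n : ℕ} (h : Hist n) (v : Fin n → Bool)
    (hv : ∀ i, pending h i → ¬ alone v i) : pendCount (h ++ [v]) = pendCount h := by
  unfold pendCount
  congr 1
  ext i'
  simp only [Finset.mem_filter, Finset.mem_univ, true_and, pending_concat]
  exact ⟨fun hp => hp.1, fun hp => ⟨hp, hv i' hp⟩⟩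

lemma stepProb_nonneg {n : ℕ} (F : Fin n → Protocol) (h : Hist n) (v : Fin n → Bool)
    (hF : ∀ i, 0 ≤ F i (personal h i) ∧ F i (personal h i) ≤ 1) :
    0 ≤ stepProb F h v := by
  apply Finset.prod_nonneg
  intro i _
  rcases hF i with ⟨h0, h1⟩
  split <;> split <;> linarith

lemma sum_stepProb {n : ℕ} (F : Fin n → Protocol) (h : Hist n) :
    ∑ v : Fin n → Bool, stepProb F h v = 1 := by
  unfold stepProb
  classical
  rw [← Fintype.prod_sum (fun i b => if pending h i then
      (if b = true then F i (personal h i) else 1 - F i (personal h i))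
    else
      (if b = true then 0 else 1))]
  rw [Finset.prod_eq_one]
  intro i _
  by_cases hp : pending h i <;> simp [hp, Fintype.sum_bool]

lemma stepProb_single {n : ℕ} (F : Fin n → Protocol) (h : Hist n) (r : ℝ)
    (hr : ∀ i, F i (personal h i) = r) (i : Fin n) (hi : pending h i) :
    stepProb F h (fun j => decide (j = i)) = r * (1 - r) ^ (pendCount h - 1) := by
  classical
  unfold stepProb
  rw [← Finset.prod_filter_mul_prod_filter_not Finset.univ (fun i' => pending h i')]
  have h2 : ∏ i' ∈ Finset.univ.filter (fun i' => ¬ pending h i'),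
      (if pending h i' then
        (if (fun j => decide (j = i)) i' = true then F i' (personal h i')
          else 1 - F i' (personal h i'))
      else (if (fun j => decide (j = i)) i' = true then 0 else 1)) = 1 := by
    apply Finset.prod_eq_one
    intro i' hi'
    simp only [Finset.mem_filter] at hi'
    have : i' ≠ i := fun hh => hi'.2 (hh ▸ hi)
    simp [hi'.2, this]
  rw [h2, mul_one]
  have hmem : i ∈ Finset.univ.filter (fun i' => pending h i') := by simp [hi]
  rw [← Finset.mul_prod_erase _ _ hmem]
  have h3 : ∀ i' ∈ (Finset.univ.filter (fun i' => pending h i')).erase i,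
      (if pending h i' then
        (if (fun j => decide (j = i)) i' = true then F i' (personal h i')
          else 1 - F i' (personal h i'))
      else (if (fun j => decide (j = i)) i' = true then 0 else 1)) = 1 - r := by
    intro i' hi'
    simp only [Finset.mem_erase, Finset.mem_filter] at hi'
    simp [hi'.2.2, hi'.1, hr i']
  rw [Finset.prod_congr rfl h3, Finset.prod_const,
    Finset.card_erase_of_mem hmem]
  simp [hi, hr i, pendCount]

open Classical in
lemma condEvProb_zero {n : ℕ} (F : Fin n → Protocol) (h : Hist n) (P : Hist n → Prop) :
    condEvProb F h 0 P = if P h then 1 else 0 := by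
  unfold condEvProb
  rw [Finset.sum_eq_single_of_mem (fun _ => fun _ => false) (Finset.mem_univ _)
    (fun b _ hb => absurd (funext fun x => absurd x.2 (by omega)) hb)]
  simp [contProb_nil]

open Classical in
lemma condEvProb_succ {n : ℕ} (F : Fin n → Protocol) (h : Hist n) (s : ℕ) (P : Hist n → Prop) :
    condEvProb F h (s+1) P =
      ∑ v : Fin n → Bool, stepProb F h v * condEvProb F (h ++ [v]) s P := by
  unfold condEvProb
  rw [← Equiv.sum_comp (Fin.consEquiv (fun _ : Fin (s+1) => (Fin n → Bool)))]
  rw [Fintype.sum_prod_type]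
  refine Finset.sum_congr rfl fun v _ => ?_
  rw [Finset.mul_sum]
  refine Finset.sum_congr rfl fun e _ => ?_
  have hofn : List.ofFn ((Fin.consEquiv (fun _ : Fin (s+1) => (Fin n → Bool))) (v, e))
      = v :: List.ofFn e := by
    simp [Fin.consEquiv, List.ofFn_succ]
  rw [hofn, contProb_cons, mul_ite, mul_zero]
  congr 1 <;> rw [List.append_cons]

lemma log_ineq_aux {x : ℝ} (h0 : 0 ≤ x) (h1 : x < 1) :
    x + x^2/2 ≤ -Real.log (1-x) := by
  have key : AntitoneOn (fun y : ℝ => y + y^2/2 + Real.log (1-y)) (Set.Icc 0 x) := by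
    have hder : ∀ y ∈ Set.Icc (0:ℝ) x, HasDerivAt (fun y : ℝ => y + y^2/2 + Real.log (1-y))
        (1 + y - 1/(1-y)) y := by
      intro y hy
      have hy1 : (1:ℝ) - y ≠ 0 := by
        have := hy.2; have : y < 1 := lt_of_le_of_lt hy.2 h1; linarith
      have d1 : HasDerivAt (fun y : ℝ => 1 - y) (-1) y := by
        simpa using (hasDerivAt_id y).const_sub 1
      have d2 : HasDerivAt (fun y : ℝ => Real.log (1-y)) (-1/(1-y)) y := d1.log hy1
      have d3 : HasDerivAt (fun y : ℝ => y + y^2/2) (1 + (2:ℕ)*y^(2-1)/2) y :=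
        (hasDerivAt_id' y).add ((hasDerivAt_pow 2 y).div_const 2)
      have := d3.add d2
      refine this.congr_deriv ?_
      push_cast
      ring
    apply antitoneOn_of_deriv_nonpos (convex_Icc 0 x)
    · exact fun y hy => (hder y hy).continuousAt.continuousWithinAt
    · intro y hy
      rw [interior_Icc] at hy
      exact ((hder y (Set.mem_Icc_of_Ioo hy)).differentiableAt).differentiableWithinAt
    · intro y hy
      rw [interior_Icc] at hy
      rw [(hder y (Set.mem_Icc_of_Ioo hy)).deriv]
      have hy1 : y < 1 := lt_of_lt_of_le hy.2 (le_of_lt h1)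
      have h2 : 0 < 1 - y := by linarith
      have : (1 + y) * (1 - y) ≤ 1 := by nlinarith [hy.1.le]
      have : 1 + y ≤ 1/(1-y) := by rw [le_div_iff₀ h2]; linarith
      linarith
  have h00 : (0:ℝ) ∈ Set.Icc (0:ℝ) x := by constructor <;> simp [h0]
  have hxx : x ∈ Set.Icc (0:ℝ) x := by constructor <;> simp [h0]
  have := key h00 hxx h0
  simp at this
  linarith

lemma phi_ineq {x : ℝ} (h0 : 0 ≤ x) (h1 : x < 1) :
    x^2/2 + x^3/6 ≤ x + (1-x) * Real.log (1-x) := by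
  have key : MonotoneOn (fun y : ℝ => y + (1-y) * Real.log (1-y) - y^2/2 - y^3/6)
      (Set.Icc 0 x) := by
    have hder : ∀ y ∈ Set.Icc (0:ℝ) x,
        HasDerivAt (fun y : ℝ => y + (1-y) * Real.log (1-y) - y^2/2 - y^3/6)
        (-Real.log (1-y) - y - y^2/2) y := by
      intro y hy
      have hylt : y < 1 := lt_of_le_of_lt hy.2 h1
      have hy1 : (1:ℝ) - y ≠ 0 := by linarith
      have d1 : HasDerivAt (fun y : ℝ => 1 - y) (-1) y := by
        simpa using (hasDerivAt_id y).const_sub 1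
      have d2 : HasDerivAt (fun y : ℝ => Real.log (1-y)) (-1/(1-y)) y := d1.log hy1
      have d3 : HasDerivAt (fun y : ℝ => (1-y) * Real.log (1-y))
          ((-1) * Real.log (1-y) + (1-y) * (-1/(1-y))) y := d1.mul d2
      have d4 : HasDerivAt (fun y : ℝ => y + (1-y) * Real.log (1-y))
          (1 + ((-1) * Real.log (1-y) + (1-y) * (-1/(1-y)))) y := (hasDerivAt_id y).add d3
      have d5 : HasDerivAt (fun y : ℝ => y^2/2 + y^3/6) (2*y^1/2 + 3*y^2/6) y :=
        ((hasDerivAt_pow 2 y).div_const 2).add ((hasDerivAt_pow 3 y).div_const 6)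
      have := d4.sub d5
      have heq : (1 + ((-1) * Real.log (1-y) + (1-y) * (-1/(1-y)))) - (2*y^1/2 + 3*y^2/6)
          = -Real.log (1-y) - y - y^2/2 := by
        field_simp
        ring
      rw [heq] at this
      refine this.congr_of_eventuallyEq (Filter.Eventually.of_forall fun z => ?_)
      simp only [Pi.sub_apply]
      ring
    apply monotoneOn_of_deriv_nonneg (convex_Icc 0 x)
    · exact fun y hy => (hder y hy).continuousAt.continuousWithinAt
    · intro y hy
      rw [interior_Icc] at hy
      exact ((hder y (Set.mem_Icc_of_Ioo hy)).differentiableAt).differentiableWithinAt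
    · intro y hy
      rw [interior_Icc] at hy
      rw [(hder y (Set.mem_Icc_of_Ioo hy)).deriv]
      have h2 := log_ineq_aux hy.1.le (lt_of_lt_of_le hy.2 h1.le)
      linarith
  have h00 : (0:ℝ) ∈ Set.Icc (0:ℝ) x := by constructor <;> simp [h0]
  have hxx : x ∈ Set.Icc (0:ℝ) x := by constructor <;> simp [h0]
  have := key h00 hxx h0
  simp at this
  linarith

lemma success_lb (m : ℕ) (β N : ℝ) (hβ0 : 0 < β) (hβ1 : β < 1) (hN : 1 < N)
    (hm1 : β * N < m) (hm2 : (m:ℝ) ≤ N) :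
    β * Real.exp (-1) ≤ (m:ℝ) * (1/N) * (1 - 1/N) ^ (m - 1) := by
  have hN0 : 0 < N := by linarith
  have hm0 : 1 ≤ m := by
    by_contra hc
    push_neg at hc
    interval_cases m
    simp at hm1
    nlinarith
  have hbase : Real.exp (-(1/(N-1))) ≤ 1 - 1/N := by
    have hN1 : (0:ℝ) < N - 1 := by linarith
    have h1 := Real.add_one_le_exp (1/(N-1))
    have h2 : N/(N-1) ≤ Real.exp (1/(N-1)) := by
      have : N/(N-1) = 1 + 1/(N-1) := by field_simp; ring
      linarith
    rw [Real.exp_neg]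
    rw [inv_le_comm₀ (Real.exp_pos _) (by rw [sub_pos, div_lt_one (by linarith : (0:ℝ) < N)]; linarith : (0:ℝ) < 1 - 1/N)]
    calc (1 - 1/N)⁻¹ = N/(N-1) := by field_simp
    _ ≤ Real.exp (1/(N-1)) := h2
  have hbase0 : 0 ≤ Real.exp (-(1/(N-1))) := (Real.exp_pos _).le
  have hpow : Real.exp (-1) ≤ (1 - 1/N) ^ (m - 1) := by
    calc Real.exp (-1) ≤ Real.exp (-(((m:ℝ) - 1)/(N-1))) := by
          apply Real.exp_le_exp.2
          have hN1 : (0:ℝ) < N - 1 := by linarith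
          rw [neg_le_neg_iff, div_le_one hN1]
          linarith
    _ = Real.exp (-(1/(N-1))) ^ ((m:ℕ) - 1) := by
          rw [← Real.exp_nat_mul]
          congr 1
          have : ((m - 1 : ℕ) : ℝ) = (m:ℝ) - 1 := by
            rw [Nat.cast_sub hm0]; simp
          rw [this]
          field_simp
    _ ≤ (1 - 1/N) ^ (m - 1) := pow_le_pow_left₀ hbase0 hbase _
  have hfrac : β ≤ (m:ℝ) * (1/N) := by
    rw [mul_one_div, le_div_iff₀ hN0]
    linarith
  calc β * Real.exp (-1) ≤ ((m:ℝ) * (1/N)) * ((1 - 1/N) ^ (m-1)) := by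
        apply mul_le_mul hfrac hpow (Real.exp_pos _).le
        positivity
  _ = (m:ℝ) * (1/N) * (1 - 1/N) ^ (m - 1) := by ring

lemma final_bound (β N : ℝ) (ℓ m₀ : ℕ) (hβ0 : 0 < β) (hβ1 : β < 1) (hN : 1 < N)
    (hNβ : 6 ≤ Real.exp 1 * (N * (1+β)))
    (hm : (m₀:ℝ) ≤ N) (hℓ : (Real.exp 1 / β) * N - 1 ≤ (ℓ:ℝ)) :
    Real.exp (-Real.log (1-β) * ((m₀:ℝ) - β*N)) * (1 - β^2*Real.exp (-1))^ℓ ≤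
      Real.exp (-(β^2*N)/3) := by
  have hβN : 0 < 1 - β := by linarith
  have hlam : 0 ≤ -Real.log (1-β) := by
    rw [neg_nonneg]
    exact Real.log_nonpos (by linarith) (by linarith)
  have he : (0:ℝ) < Real.exp (-1) := Real.exp_pos _
  have he1 : Real.exp (-1) ≤ 1 := by
    rw [Real.exp_le_one_iff]; norm_num
  have hc0 : 0 ≤ 1 - β^2 * Real.exp (-1) := by nlinarith
  have step1 : Real.exp (-Real.log (1-β) * ((m₀:ℝ) - β*N)) ≤
      Real.exp (-Real.log (1-β) * ((1-β)*N)) := by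
    apply Real.exp_le_exp.2
    have : (m₀:ℝ) - β*N ≤ (1-β)*N := by nlinarith
    nlinarith [mul_le_mul_of_nonneg_left this hlam]
  have step2 : (1 - β^2*Real.exp (-1))^ℓ ≤ Real.exp (-(β^2*Real.exp (-1)) * ℓ) := by
    calc (1 - β^2*Real.exp (-1))^ℓ ≤ (Real.exp (-(β^2*Real.exp (-1))))^ℓ := by
          apply pow_le_pow_left₀ hc0
          have := Real.add_one_le_exp (-(β^2*Real.exp (-1)))
          linarith
    _ = Real.exp (-(β^2*Real.exp (-1)) * ℓ) := by
          rw [← Real.exp_nat_mul]; ring_nf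
  have hexp0 : 0 ≤ Real.exp (-Real.log (1-β) * ((m₀:ℝ) - β*N)) := (Real.exp_pos _).le
  have hpow0 : 0 ≤ (1 - β^2*Real.exp (-1))^ℓ := pow_nonneg hc0 _
  calc Real.exp (-Real.log (1-β) * ((m₀:ℝ) - β*N)) * (1 - β^2*Real.exp (-1))^ℓ
      ≤ Real.exp (-Real.log (1-β) * ((1-β)*N)) * Real.exp (-(β^2*Real.exp (-1)) * ℓ) := by
        apply mul_le_mul step1 step2 hpow0 (Real.exp_pos _).le
  _ = Real.exp (-Real.log (1-β) * ((1-β)*N) + (-(β^2*Real.exp (-1)) * ℓ)) :=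
        (Real.exp_add _ _).symm
  _ ≤ Real.exp (-(β^2*N)/3) := by
        apply Real.exp_le_exp.2
        -- main exponent inequality
        have hphi := phi_ineq hβ0.le hβ1
        -- -log(1-β)*(1-β) ≤ β - β^2/2 - β^3/6
        have h1 : -Real.log (1-β) * ((1-β)*N) ≤ (β - β^2/2 - β^3/6) * N := by
          have hstep : (-Real.log (1-β)) * (1-β) ≤ β - β^2/2 - β^3/6 := by nlinarith
          nlinarith [mul_le_mul_of_nonneg_right hstep (show (0:ℝ) ≤ N by linarith)]
        have hee : Real.exp (-1) * Real.exp 1 = 1 := by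
          rw [← Real.exp_add]; simp
        have he10 : 0 < Real.exp 1 := Real.exp_pos _
        have h2 : β*N - β^2*Real.exp (-1) ≤ (β^2*Real.exp (-1)) * ℓ := by
          have hmono := mul_le_mul_of_nonneg_left hℓ (by positivity : (0:ℝ) ≤ β^2*Real.exp (-1))
          have hb : β ≠ 0 := ne_of_gt hβ0
          have hkey : β^2*Real.exp (-1) * (Real.exp 1 / β * N - 1)
              = β*N*(Real.exp (-1)*Real.exp 1) - β^2*Real.exp (-1) := by
            field_simp
          rw [hee, mul_one] at hkey
          linarith [hmono, hkey]
        -- need: (β - β²/2 - β³/6)N - (βN - β²e⁻¹) ≤ -β²N/3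
        -- i.e. β²e⁻¹ ≤ N(β²/6 + β³/6) ⟸ e⁻¹ ≤ N(1+β)/6 ⟸ 6 ≤ e N(1+β)
        have h3 : β^2 * Real.exp (-1) ≤ N * (β^2/6 + β^3/6) := by
          have h4 : Real.exp (-1) * 6 ≤ N * (1+β) := by
            have := mul_le_mul_of_nonneg_left hNβ he.le
            calc Real.exp (-1) * 6 ≤ Real.exp (-1) * (Real.exp 1 * (N * (1+β))) := this
            _ = N * (1+β) := by rw [← mul_assoc, hee, one_mul]
          nlinarith [sq_nonneg β, hβ0.le]
        linarith

lemma core {n : ℕ} (F : Fin n → Protocol) (β N : ℝ) (a b : ℕ)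
    (hβ0 : 0 < β) (hβ1 : β < 1) (hN : 1 < N)
    (hF : ∀ h' : Hist n, a ≤ h'.length → h'.length < b →
      ∀ i, F i (personal h' i) = 1/N) :
    ∀ s : ℕ, ∀ h : Hist n, a ≤ h.length → h.length + s ≤ b →
      (pendCount h : ℝ) ≤ N →
      condEvProb F h s (fun _ => True) = 1 ∧
      1 - Real.exp (-Real.log (1-β) * ((pendCount h : ℝ) - β * N)) *
          (1 - β^2*Real.exp (-1))^s ≤
        condEvProb F h s (fun h' => (pendCount h' : ℝ) ≤ β * N) := by
  classical
  have he : (0:ℝ) < Real.exp (-1) := Real.exp_pos _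
  have he1 : Real.exp (-1) ≤ 1 := by rw [Real.exp_le_one_iff]; norm_num
  have hc0 : 0 ≤ 1 - β^2 * Real.exp (-1) := by nlinarith
  have hlam : 0 ≤ -Real.log (1-β) := by
    rw [neg_nonneg]; exact Real.log_nonpos (by linarith) (by linarith)
  intro s
  induction s with
  | zero =>
    intro h ha hb hm
    refine ⟨by rw [condEvProb_zero]; simp, ?_⟩
    rw [condEvProb_zero]
    by_cases hP : (pendCount h : ℝ) ≤ β * N
    · rw [if_pos hP]
      have : 0 ≤ Real.exp (-Real.log (1-β) * ((pendCount h : ℝ) - β * N)) *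
          (1 - β^2*Real.exp (-1))^0 := by
        apply mul_nonneg (Real.exp_pos _).le (pow_nonneg hc0 _)
      linarith
    · rw [if_neg hP]
      push_neg at hP
      have h1 : (1:ℝ) ≤ Real.exp (-Real.log (1-β) * ((pendCount h : ℝ) - β * N)) := by
        have h0 : 0 ≤ (pendCount h : ℝ) - β * N := by linarith
        exact Real.one_le_exp (mul_nonneg hlam h0)
      simp only [pow_zero, mul_one]
      linarith
  | succ s ih =>
    intro h ha hb hm
    have hFh : ∀ i, F i (personal h i) = 1/N := hF h ha (by omega)
    have hFbounds : ∀ i, 0 ≤ F i (personal h i) ∧ F i (personal h i) ≤ 1 := by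
      intro i
      rw [hFh i]
      constructor
      · positivity
      · rw [div_le_one (by linarith)]; linarith
    have hsp0 : ∀ v, 0 ≤ stepProb F h v := fun v => stepProb_nonneg _ _ _ hFbounds
    have hsum : ∑ v : Fin n → Bool, stepProb F h v = 1 := sum_stepProb _ _
    have hihapp : ∀ v : Fin n → Bool,
        condEvProb F (h ++ [v]) s (fun _ => True) = 1 ∧
        1 - Real.exp (-Real.log (1-β) * ((pendCount (h ++ [v]) : ℝ) - β * N)) *
            (1 - β^2*Real.exp (-1))^s ≤
          condEvProb F (h ++ [v]) s (fun h' => (pendCount h' : ℝ) ≤ β * N) := by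
      intro v
      apply ih (h ++ [v]) (by simp; omega) (by simp; omega)
      calc ((pendCount (h ++ [v]) : ℝ)) ≤ (pendCount h : ℝ) :=
            Nat.cast_le.2 (pendCount_append_le _ _)
      _ ≤ N := hm
    have hTot : condEvProb F h (s+1) (fun _ => True) = 1 := by
      rw [condEvProb_succ, Finset.sum_congr rfl (fun v _ => by rw [(hihapp v).1])]
      simpa using hsum
    refine ⟨hTot, ?_⟩
    by_cases hsmall : (pendCount h : ℝ) ≤ β * N
    · have heq : condEvProb F h (s+1) (fun h' => (pendCount h' : ℝ) ≤ β*N)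
          = condEvProb F h (s+1) (fun _ => True) := by
        unfold condEvProb
        refine Finset.sum_congr rfl fun e _ => ?_
        rw [if_pos, if_pos trivial]
        calc ((pendCount (h ++ List.ofFn e) : ℝ)) ≤ (pendCount h : ℝ) :=
              Nat.cast_le.2 (pendCount_append_le _ _)
        _ ≤ β*N := hsmall
      rw [heq, hTot]
      have : 0 ≤ Real.exp (-Real.log (1-β) * ((pendCount h : ℝ) - β * N)) *
          (1 - β^2*Real.exp (-1))^(s+1) :=
        mul_nonneg (Real.exp_pos _).le (pow_nonneg hc0 _)
      linarith
    · push_neg at hsmall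
      set m := pendCount h with hmdef
      have hm1 : 1 ≤ m := by
        rcases Nat.eq_zero_or_pos m with h0 | h0
        · rw [h0] at hsmall; simp at hsmall; nlinarith
        · exact h0
      set Bexp := Real.exp (-Real.log (1-β) * ((m : ℝ) - β * N)) with hBdef
      set c := 1 - β^2*Real.exp (-1) with hcdef
      set B := Bexp * c^s with hBBdef
      have hB0 : 0 ≤ B := mul_nonneg (Real.exp_pos _).le (pow_nonneg hc0 _)
      set Good := Finset.univ.filter
        (fun v : Fin n → Bool => ∃ i, pending h i ∧ alone v i) with hGdef
      set P1 := ∑ v ∈ Good, stepProb F h v with hP1def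
      set P2 := ∑ v ∈ Finset.univ.filter
        (fun v : Fin n → Bool => ¬ ∃ i, pending h i ∧ alone v i), stepProb F h v with hP2def
      have hP12 : P1 + P2 = 1 := by
        rw [hP1def, hP2def, hGdef,
          Finset.sum_filter_add_sum_filter_not Finset.univ _ (stepProb F h)]
        exact hsum
      -- lower bound on P1
      have hq : β * Real.exp (-1) ≤ P1 := by
        have hδinj : ∀ x ∈ Finset.univ.filter (fun i : Fin n => pending h i),
            ∀ y ∈ Finset.univ.filter (fun i : Fin n => pending h i),
            (fun i : Fin n => (fun j : Fin n => decide (j = i))) x =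
            (fun i : Fin n => (fun j : Fin n => decide (j = i))) y → x = y := by
          intro x _ y _ hxy
          have := congrFun hxy x
          simp at this
          exact this
        have himg : (Finset.univ.filter (fun i : Fin n => pending h i)).image
            (fun i : Fin n => (fun j : Fin n => decide (j = i))) ⊆ Good := by
          intro v hv
          rw [Finset.mem_image] at hv
          obtain ⟨i, hi, rfl⟩ := hv
          rw [hGdef, Finset.mem_filter]
          refine ⟨Finset.mem_univ _, ⟨i, ?_, ?_⟩⟩
          · simpa using hi
          · exact ⟨by simp, fun j hj => by simp [hj]⟩
        calc β * Real.exp (-1) ≤ (m:ℝ) * (1/N) * (1 - 1/N) ^ (m - 1) :=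
              success_lb m β N hβ0 hβ1 hN hsmall hm
        _ = ∑ i ∈ Finset.univ.filter (fun i : Fin n => pending h i),
              stepProb F h (fun j : Fin n => decide (j = i)) := by
            rw [Finset.sum_congr rfl (fun i hi =>
              stepProb_single F h (1/N) hFh i (by simpa using hi))]
            rw [Finset.sum_const, nsmul_eq_mul]
            rw [hmdef, pendCount]
            ring
        _ = ∑ v ∈ (Finset.univ.filter (fun i : Fin n => pending h i)).image
              (fun i : Fin n => (fun j : Fin n => decide (j = i))), stepProb F h v :=
            (Finset.sum_image hδinj).symm
        _ ≤ P1 := Finset.sum_le_sum_of_subset_of_nonneg himg (fun v _ _ => hsp0 v)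
      -- per-branch bounds
      have hGoodB : ∀ v ∈ Good, 1 - (1-β) * B ≤
          condEvProb F (h ++ [v]) s (fun h' => (pendCount h' : ℝ) ≤ β * N) := by
        intro v hv
        rw [hGdef, Finset.mem_filter] at hv
        obtain ⟨-, i, hi, hvi⟩ := hv
        have hcnt : pendCount (h ++ [v]) = m - 1 := pendCount_concat_good h v i hi hvi
        have h2 := (hihapp v).2
        rw [hcnt] at h2
        have hcast : ((m - 1 : ℕ) : ℝ) = (m:ℝ) - 1 := by
          rw [Nat.cast_sub hm1]; simp
        rw [hcast] at h2
        have hexp : Real.exp (-Real.log (1-β) * ((m:ℝ) - 1 - β * N)) = (1-β) * Bexp := by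
          have harg : -Real.log (1-β) * ((m:ℝ) - 1 - β * N)
              = Real.log (1-β) + (-Real.log (1-β) * ((m:ℝ) - β * N)) := by ring
          rw [harg, Real.exp_add, Real.exp_log (show (0:ℝ) < 1-β by linarith), hBdef]
        rw [hexp] at h2
        calc 1 - (1-β) * B = 1 - (1-β) * Bexp * c^s := by rw [hBBdef]; ring
        _ ≤ _ := h2
      have hBadB : ∀ v ∈ Finset.univ.filter
          (fun v : Fin n → Bool => ¬ ∃ i, pending h i ∧ alone v i), 1 - B ≤
          condEvProb F (h ++ [v]) s (fun h' => (pendCount h' : ℝ) ≤ β * N) := by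
        intro v hv
        rw [Finset.mem_filter] at hv
        push_neg at hv
        have hcnt : pendCount (h ++ [v]) = m := pendCount_concat_bad h v hv.2
        have h2 := (hihapp v).2
        rw [hcnt] at h2
        exact h2
      -- assemble
      rw [condEvProb_succ]
      rw [← Finset.sum_filter_add_sum_filter_not Finset.univ
        (fun v : Fin n → Bool => ∃ i, pending h i ∧ alone v i)
        (fun v => stepProb F h v *
          condEvProb F (h ++ [v]) s (fun h' => (pendCount h' : ℝ) ≤ β * N))]
      have hpart1 : ∑ v ∈ Good, stepProb F h v * (1 - (1-β) * B) ≤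
          ∑ v ∈ Good, stepProb F h v *
            condEvProb F (h ++ [v]) s (fun h' => (pendCount h' : ℝ) ≤ β * N) :=
        Finset.sum_le_sum fun v hv =>
          mul_le_mul_of_nonneg_left (hGoodB v hv) (hsp0 v)
      have hpart2 : ∑ v ∈ Finset.univ.filter
            (fun v : Fin n → Bool => ¬ ∃ i, pending h i ∧ alone v i),
            stepProb F h v * (1 - B) ≤
          ∑ v ∈ Finset.univ.filter
            (fun v : Fin n → Bool => ¬ ∃ i, pending h i ∧ alone v i),
            stepProb F h v *
            condEvProb F (h ++ [v]) s (fun h' => (pendCount h' : ℝ) ≤ β * N) :=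
        Finset.sum_le_sum fun v hv =>
          mul_le_mul_of_nonneg_left (hBadB v hv) (hsp0 v)
      rw [← Finset.sum_mul] at hpart1 hpart2
      rw [← hP1def] at hpart1
      rw [← hP2def] at hpart2
      have hfin : 1 - Bexp * c^(s+1) ≤ P1 * (1 - (1-β) * B) + P2 * (1 - B) := by
        have hc : c^(s+1) = c^s * c := pow_succ c s
        have hBP : B * P1 + B * P2 = B := by rw [← mul_add, hP12, mul_one]
        have h4 : B * β * (β * Real.exp (-1)) ≤ B * β * P1 :=
          mul_le_mul_of_nonneg_left hq (mul_nonneg hB0 hβ0.le)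
        have hL : Bexp * c^(s+1) = B * c := by rw [hBBdef, hc]; ring
        rw [hL, hcdef]
        linarith [h4, hBP, hP12]
      calc 1 - Bexp * c^(s+1) ≤ P1 * (1 - (1-β) * B) + P2 * (1 - B) := hfin
      _ ≤ _ := add_le_add hpart1 hpart2

end Contention

namespace Contention

/-- Suppose all `n` players use protocol `Q`.  For any `j ∈ {1, …, k}`:
conditionally on any positive-probability joint history `h` reaching the start of interval
`Iⱼ` with at most `nⱼ` pending players, the probability that at the end of `Iⱼ` at most
`n_{j+1}` players are pending is at least `1 − exp(−β^{j+2}·n/3)`. -/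
theorem interval_halving_lemma :
    ∀ (β : ℝ) (n k : ℕ) (p : ℕ → ℝ),
      0 < β → β < 1 →
      β ^ (k + 1) * n ≤ Real.sqrt n → Real.sqrt n < β ^ k * n →
      QSpec β n k p →
      ∀ j : ℕ, 1 ≤ j → j ≤ k →
        ∀ h : Hist n, h.length = cumLen β n k (j - 1) →
          0 < histProb (fun _ : Fin n => ageProtocol p) h →
          (pendCount h : ℝ) ≤ nj β n j →
          1 - Real.exp (-(β ^ (j + 2) * n) / 3) ≤
            condEvProb (fun _ : Fin n => ageProtocol p) h (intervalLen β n k j)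
              (fun h' => (pendCount h' : ℝ) ≤ nj β n (j + 1)) := by
  intro β n k p hβ0 hβ1 hk1 hk2 hQ j hj1 hjk h hlen hpos hpend
  set N := nj β n j with hNdef
  -- basic facts
  have hn2 : 2 ≤ n := by
    by_contra hc
    push_neg at hc
    interval_cases n
    · simp at hk2
    · have h1 : β ^ k ≤ 1 := pow_le_one₀ hβ0.le hβ1.le
      simp at hk2
      linarith
  have hn0 : (0:ℝ) < n := by positivity
  have hsqn : Real.sqrt 2 ≤ Real.sqrt n := Real.sqrt_le_sqrt (by exact_mod_cast hn2)
  have hsq14 : (1.414:ℝ) ≤ Real.sqrt 2 := by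
    rw [show (1.414:ℝ) = Real.sqrt (1.414^2) from (Real.sqrt_sq (by norm_num)).symm]
    apply Real.sqrt_le_sqrt
    norm_num
  have hsq : Real.sqrt n < N := by
    rw [hNdef]
    calc Real.sqrt n < β ^ k * n := hk2
    _ ≤ β ^ j * n := by
        apply mul_le_mul_of_nonneg_right _ hn0.le
        exact pow_le_pow_of_le_one hβ0.le hβ1.le hjk
    _ = nj β n j := rfl
  have hN1 : 1 < N := by
    have : (1:ℝ) < Real.sqrt n := by linarith
    linarith
  have hβn : N ≤ β * n := by
    rw [hNdef]
    show β ^ j * n ≤ β * n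
    apply mul_le_mul_of_nonneg_right _ hn0.le
    calc β ^ j ≤ β ^ 1 := pow_le_pow_of_le_one hβ0.le hβ1.le hj1
    _ = β := pow_one β
  have hN2 : (n:ℝ) < N^2 := by
    have h0 : (0:ℝ) ≤ Real.sqrt n := Real.sqrt_nonneg _
    nlinarith [Real.sq_sqrt hn0.le]
  have hβN1 : 1 < β * N := by
    have h1 : N * N ≤ β * n * N := mul_le_mul_of_nonneg_right hβn (by linarith)
    have h2 : (n:ℝ) < β * n * N := by nlinarith
    nlinarith
  have hNβ6 : 6 ≤ Real.exp 1 * (N * (1+β)) := by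
    have hee : (2.7182818283:ℝ) < Real.exp 1 := Real.exp_one_gt_d9
    have hN14 : (1.414:ℝ) < N := by linarith
    have hβN0 : 0 < β * N := by nlinarith
    nlinarith [mul_pos hβ0 (show (0:ℝ) < N by linarith)]
  -- interval length
  have hILen : intervalLen β n k j = ⌊(Real.exp 1 / β) * N⌋₊ := by
    rw [intervalLen, if_pos hjk]
  have hfloor : (Real.exp 1 / β) * N - 1 ≤ ((intervalLen β n k j : ℕ) : ℝ) := by
    rw [hILen]
    have := Nat.lt_floor_add_one ((Real.exp 1 / β) * N)
    push_cast
    linarith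
  -- cumulative length
  have hcum : cumLen β n k j = cumLen β n k (j-1) + intervalLen β n k j := by
    have hj' : j = (j-1)+1 := (Nat.succ_pred_eq_of_pos hj1).symm
    rw [hj', cumLen, Finset.sum_Icc_succ_top (by omega : 1 ≤ (j-1)+1)]
    rfl
  -- protocol values
  have hp : ∀ t : ℕ, cumLen β n k (j-1) < t → t ≤ cumLen β n k j → p t = 1/N := by
    intro t h1 h2
    have := hQ.1 j hj1 (by omega) t h1 h2
    rw [this]
  have hF : ∀ h' : Hist n, cumLen β n k (j-1) ≤ h'.length → h'.length < cumLen β n k j →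
      ∀ i : Fin n, (fun _ : Fin n => ageProtocol p) i (personal h' i) = 1/N := by
    intro h' h1 h2 i
    show ageProtocol p (personal h' i) = 1/N
    unfold ageProtocol personal
    rw [List.length_map]
    exact hp (h'.length + 1) (by omega) (by omega)
  -- apply core
  have hcore := (core (fun _ : Fin n => ageProtocol p) β N (cumLen β n k (j-1))
    (cumLen β n k j) hβ0 hβ1 hN1 hF (intervalLen β n k j) h (le_of_eq hlen.symm)
    (by omega) hpend).2
  have hPeq : (fun h' : Hist n => (pendCount h' : ℝ) ≤ β * N)
      = (fun h' : Hist n => (pendCount h' : ℝ) ≤ nj β n (j+1)) := by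
    funext h'
    rw [show β * N = nj β n (j+1) by rw [hNdef]; unfold nj; rw [pow_succ]; ring]
  rw [hPeq] at hcore
  refine le_trans ?_ hcore
  have hfb := final_bound β N (intervalLen β n k j) (pendCount h) hβ0 hβ1 hN1 hNβ6 hpend hfloor
  have hexp : -(β ^ (j + 2) * n) / 3 = -(β^2*N)/3 := by
    rw [hNdef]; unfold nj; rw [pow_add]; ring
  rw [hexp]
  linarith

end Contention
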